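/- Let n ≥ 2 and let p(x) = a_0 + a_1 x + ... + a_r x^r be a polynomial with integer coefficients such that p(α+i) ≡ 0 (mod n) for all i ∈ {0,1,...,r}, for some integer α. Then a_k · r! ≡ 0 (mod n) for every k ∈ {0,1,...,r}. -/
import Mathlib

open Polynomial Finset

private noncomputable def Bpoly (α : ℤ) (j : ℕ) : Polynomial ℤ :=
  ∏ t ∈ Finset.range j, (X - C (α + t))

private lemma Bpoly_monic (α : ℤ) (j : ℕ) : (Bpoly α j).Monic :=
  monic_prod_of_monic _ _ fun t _ => monic_X_sub_C _

private lemma Bpoly_natDegree (α : ℤ) (j : ℕ) : (Bpoly α j).natDegree = j := by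
  unfold Bpoly
  rw [natDegree_prod_of_monic _ _ (fun t _ => monic_X_sub_C _)]
  simp only [natDegree_X_sub_C, Finset.sum_const, smul_eq_mul, mul_one, Finset.card_range]

private lemma Bpoly_eval (α : ℤ) (j i : ℕ) :
    (Bpoly α j).eval (α + i) = (i.descFactorial j : ℤ) := by
  unfold Bpoly
  rw [eval_prod]
  induction j with
  | zero => simp
  | succ j ih =>
    rw [Finset.prod_range_succ, ih]
    simp only [eval_sub, eval_X, eval_C]
    rcases le_or_gt j i with hj | hj
    · rw [Nat.descFactorial_succ]
      push_cast [hj]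
      ring
    · rw [Nat.descFactorial_eq_zero_iff_lt.2 hj,
        Nat.descFactorial_eq_zero_iff_lt.2 (Nat.lt_succ_of_lt hj)]
      simp

private lemma Bpoly_repr (α : ℤ) : ∀ (r : ℕ) (p : Polynomial ℤ), p.natDegree ≤ r →
    ∃ d : ℕ → ℤ, p = ∑ j ∈ Finset.range (r + 1), C (d j) * Bpoly α j := by
  intro r
  induction r with
  | zero =>
    intro p hp
    refine ⟨fun _ => p.coeff 0, ?_⟩
    rw [Finset.sum_range_one]
    have : Bpoly α 0 = 1 := by simp [Bpoly]
    rw [this, mul_one, Polynomial.eq_C_of_natDegree_le_zero hp]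
    simp
  | succ r ih =>
    intro p hp
    set c := p.coeff (r + 1) with hc
    set q := p - C c * Bpoly α (r + 1) with hqdef
    have hBc : (Bpoly α (r + 1)).coeff (r + 1) = 1 := by
      have := (Bpoly_monic α (r + 1)).coeff_natDegree
      rwa [Bpoly_natDegree] at this
    have hq : q.natDegree ≤ r := by
      rw [Polynomial.natDegree_le_iff_coeff_eq_zero]
      intro m hm
      simp only [hqdef, coeff_sub, coeff_C_mul]
      rcases eq_or_lt_of_le (Nat.succ_le_of_lt hm) with hm' | hm'
      · rw [← hm', hBc, mul_one, sub_self]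
      · rw [coeff_eq_zero_of_natDegree_lt (lt_of_le_of_lt hp hm'),
          coeff_eq_zero_of_natDegree_lt (by rw [Bpoly_natDegree]; exact hm')]
        ring
    obtain ⟨d, hd⟩ := ih q hq
    refine ⟨Function.update d (r + 1) c, ?_⟩
    rw [Finset.sum_range_succ, Function.update_self]
    have hsum : ∑ j ∈ Finset.range (r + 1), C (Function.update d (r + 1) c j) * Bpoly α j
        = ∑ j ∈ Finset.range (r + 1), C (d j) * Bpoly α j := by
      refine Finset.sum_congr rfl fun j hj => ?_
      rw [Function.update_of_ne (Nat.ne_of_lt (Finset.mem_range.1 hj))]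
    rw [hsum, ← hd, hqdef]
    ring

theorem coeff_mul_factorial_dvd_of_vanishes_consecutive
    (n : ℕ) (hn : 2 ≤ n) (r : ℕ) (a : ℕ → ℤ) (α : ℤ)
    (h : ∀ i : ℕ, i ≤ r → (n : ℤ) ∣ ∑ k ∈ Finset.range (r + 1), a k * (α + i) ^ k) :
    ∀ k : ℕ, k ≤ r → (n : ℤ) ∣ a k * (r.factorial : ℤ) := by
  classical
  set p : Polynomial ℤ := ∑ k ∈ Finset.range (r + 1), C (a k) * X ^ k with hpdef
  have hdeg : p.natDegree ≤ r := by
    refine Polynomial.natDegree_sum_le_of_forall_le _ _ fun k hk => ?_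
    calc (C (a k) * X ^ k).natDegree ≤ k :=
          (Polynomial.natDegree_C_mul_le _ _).trans (by simp)
      _ ≤ r := Nat.lt_succ_iff.1 (Finset.mem_range.1 hk)
  have heval : ∀ i : ℕ, p.eval (α + i) = ∑ k ∈ Finset.range (r + 1), a k * (α + i) ^ k := by
    intro i
    rw [hpdef, Polynomial.eval_finset_sum]
    simp
  obtain ⟨d, hd⟩ := Bpoly_repr α r p hdeg
  -- key divisibility for the d's
  have key : ∀ j : ℕ, j ≤ r → (n : ℤ) ∣ (j.factorial : ℤ) * d j := by
    intro j
    induction j using Nat.strong_induction_on with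
    | _ i IH =>
      intro hi
      have hev : (n : ℤ) ∣ ∑ j ∈ Finset.range (r + 1), d j * (i.descFactorial j : ℤ) := by
        have := h i hi
        rw [← heval i, hd, Polynomial.eval_finset_sum] at this
        simpa only [eval_mul, eval_C, Bpoly_eval] using this
      have hmem : i ∈ Finset.range (r + 1) := Finset.mem_range.2 (Nat.lt_succ_of_le hi)
      rw [← Finset.add_sum_erase _ _ hmem] at hev
      have hrest : (n : ℤ) ∣ ∑ j ∈ (Finset.range (r + 1)).erase i,
          d j * (i.descFactorial j : ℤ) := by
        refine Finset.dvd_sum fun j hj => ?_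
        have hji : j ≠ i := Finset.ne_of_mem_erase hj
        rcases lt_or_gt_of_ne hji with hlt | hgt
        · have hjr : j ≤ r := le_trans (le_of_lt hlt) hi
          have hdj := IH j hlt hjr
          rw [Nat.descFactorial_eq_factorial_mul_choose]
          have heq : d j * ((j.factorial * i.choose j : ℕ) : ℤ)
              = ((j.factorial : ℤ) * d j) * (i.choose j : ℤ) := by push_cast; ring
          rw [heq]
          exact hdj.mul_right _
        · rw [Nat.descFactorial_eq_zero_iff_lt.2 hgt]
          simp
      have := (Int.dvd_sub hev hrest)
      rw [add_sub_cancel_right, Nat.descFactorial_self] at this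
      rwa [mul_comm] at this
  intro k hk
  -- a k = p.coeff k = ∑ d j * (Bpoly α j).coeff k
  have hak : a k = ∑ j ∈ Finset.range (r + 1), d j * (Bpoly α j).coeff k := by
    have h1 : p.coeff k = a k := by
      rw [hpdef, Polynomial.finset_sum_coeff]
      simp only [coeff_C_mul, coeff_X_pow]
      rw [Finset.sum_eq_single k]
      · simp
      · intro b _ hb; simp [hb, Ne.symm hb]
      · intro hkk; exact absurd (Finset.mem_range.2 (Nat.lt_succ_of_le hk)) hkk
    rw [← h1, hd, Polynomial.finset_sum_coeff]
    simp [coeff_C_mul]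
  rw [hak, Finset.sum_mul]
  refine Finset.dvd_sum fun j hj => ?_
  have hjr : j ≤ r := Nat.lt_succ_iff.1 (Finset.mem_range.1 hj)
  obtain ⟨m, hm⟩ := Nat.factorial_dvd_factorial hjr
  have heq : d j * (Bpoly α j).coeff k * (r.factorial : ℤ)
      = ((j.factorial : ℤ) * d j) * ((Bpoly α j).coeff k * (m : ℤ)) := by
    rw [hm]; push_cast; ring
  rw [heq]
  exact (key j hjr).mul_right _
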